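/- For any variable (or integer) y and nonnegative integers a, b, c, the following identity holds: ∑_{j ≥ 0} binom(b, j) · binom(y+a, a-b+1+j) · binom(y+a+b+c-j, c-j) = binom(y+a+c, a-b+c+1) · binom(a+c+1, c). -/

import Mathlib

open Finset

/-- Generalized binomial coefficient `binom(a, b)` for integers `a, b`:
`a(a-1)⋯(a-b+1)/b!` when `b ≥ 0`, and `0` when `b < 0`. -/
noncomputable def zbinom (a b : ℤ) : ℤ := if 0 ≤ b then Ring.choose a b.toNat else 0

lemma zb_neg {k : ℤ} (h : k < 0) (x : ℤ) : zbinom x k = 0 := by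
  simp [zbinom, not_le.2 h]

lemma zb_zero (x : ℤ) : zbinom x 0 = 1 := by
  simp [zbinom]

lemma zb_nat (n : ℕ) {k : ℤ} (hk : 0 ≤ k) : zbinom n k = Nat.choose n k.toNat := by
  simp [zbinom, hk, Ring.choose_natCast]

lemma zb_nat_lt (n : ℕ) {k : ℤ} (h : (n : ℤ) < k) : zbinom n k = 0 := by
  rw [zb_nat n (le_trans (Int.ofNat_nonneg n) h.le), Nat.choose_eq_zero_of_lt (by omega)]
  simp

lemma zb_self (n : ℕ) : zbinom n n = 1 := by
  rw [zb_nat n (Int.ofNat_nonneg n)]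
  simp

lemma zb_zero_left {k : ℤ} (h : k ≠ 0) : zbinom 0 k = 0 := by
  rcases lt_or_gt_of_ne h with h' | h'
  · exact zb_neg h' 0
  · have h0 : (0:ℤ) = ((0:ℕ) : ℤ) := rfl
    rw [h0, zb_nat 0 h'.le, Nat.choose_eq_zero_of_lt (by omega)]

lemma zb_pascal (x k : ℤ) : zbinom x k = zbinom (x-1) (k-1) + zbinom (x-1) k := by
  rcases lt_trichotomy k 0 with h | h | h
  · rw [zb_neg h, zb_neg h, zb_neg (by omega)]; ring
  · subst h
    rw [zb_zero, zb_zero, zb_neg (by omega)]; ring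
  · unfold zbinom
    rw [if_pos h.le, if_pos (by omega), if_pos (by omega)]
    have hx : x = (x - 1) + 1 := by ring
    have hk : k.toNat = (k-1).toNat + 1 := by omega
    rw [hk, hx, Ring.choose_succ_succ, show x - 1 + 1 - 1 = x - 1 by ring]

lemma const_of_step {f : ℤ → ℤ} (h : ∀ y, f y = f (y - 1)) (y z : ℤ) : f y = f z := by
  have key : ∀ w : ℤ, f w = f 0 := by
    intro w
    induction w using Int.induction_on with
    | zero => rfl
    | succ n ih => rw [← ih, show f (↑n + 1) = f (↑n + 1 - 1) from h _, add_sub_cancel_right]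
    | pred n ih =>
      rw [← ih]
      exact (h _).symm
  rw [key y, key z]

lemma key (m : ℕ) : ∀ (a : ℤ), -1 ≤ a → ∀ (c : ℕ), (a+1).toNat + c = m → ∀ (b : ℕ) (y : ℤ),
    ∑ j ∈ Finset.range (b + 1),
        zbinom b j * zbinom (y + a) (a - b + 1 + j) *
          zbinom (y + a + b + c - j) ((c : ℤ) - j) =
      zbinom (y + a + c) (a - b + c + 1) * zbinom (a + c + 1) c := by
  induction m using Nat.strong_induction_on with
  | _ m ih =>
  intro a ha c hm b y
  rcases eq_or_lt_of_le ha with hneg | hpos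
  · -- case a = -1
    subst hneg
    rw [Finset.sum_eq_single_of_mem b (Finset.self_mem_range_succ b) ?_]
    · rw [show (-1 - (b:ℤ) + 1 + b) = 0 by ring, zb_zero, zb_self,
        show (y + -1 + (b:ℤ) + c - b) = y + -1 + c by ring,
        show (-1 - (b:ℤ) + c + 1) = (c:ℤ) - b by ring,
        show (-1 + (c:ℤ) + 1) = ((c:ℕ):ℤ) by ring, zb_self]
      ring
    · intro j hj hjb
      rw [zb_neg (show (-1 - (b:ℤ) + 1 + j) < 0 by
        simp only [Finset.mem_range] at hj; omega)]
      ring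
  · -- 0 ≤ a
    lift a to ℕ using (by omega : (0:ℤ) ≤ a) with an
    rcases c with _ | c'
    · -- c = 0
      rw [Finset.sum_eq_single_of_mem 0 (Finset.mem_range.2 (Nat.succ_pos b)) ?_]
      · simp only [Nat.cast_zero, add_zero, sub_zero, sub_self, Nat.cast_ofNat]
        rw [zb_zero, zb_zero, zb_zero]
        ring
      · intro j hj hj0
        rw [zb_neg (show ((0:ℕ):ℤ) - j < 0 by
          simp only [Nat.cast_zero]; omega)]
        ring
    · -- main case : c = c' + 1, a = an ≥ 0
      have hm1 : ((an:ℤ)+1).toNat + c' < m := by omega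
      have hm2 : (((an:ℤ)-1)+1).toNat + (c'+1) < m := by omega
      have ih1 := fun (b : ℕ) (y : ℤ) =>
        ih (((an:ℤ)+1).toNat + c') hm1 (an:ℤ) (by omega) c' rfl b y
      have ih2 := fun (b : ℕ) (y : ℤ) =>
        ih ((((an:ℤ)-1)+1).toNat + (c'+1)) hm2 ((an:ℤ)-1) (by omega) (c'+1) rfl b y
      have hrec : ∀ y : ℤ,
          (∑ j ∈ Finset.range (b+1), zbinom b j * zbinom (y + (an:ℤ)) ((an:ℤ) - b + 1 + j) *
              zbinom (y + (an:ℤ) + b + ((c'+1:ℕ):ℤ) - j) (((c'+1:ℕ):ℤ) - j))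
        = (∑ j ∈ Finset.range (b+1), zbinom b j * zbinom (y + (an:ℤ)) ((an:ℤ) - b + 1 + j) *
              zbinom (y + (an:ℤ) + b + (c':ℤ) - j) ((c':ℤ) - j))
        + (∑ j ∈ Finset.range (b+1), zbinom b j * zbinom (y + ((an:ℤ)-1)) (((an:ℤ)-1) - b + 1 + j) *
              zbinom (y + ((an:ℤ)-1) + b + ((c'+1:ℕ):ℤ) - j) (((c'+1:ℕ):ℤ) - j))
        + (∑ j ∈ Finset.range (b+1), zbinom b j * zbinom ((y-1) + (an:ℤ)) ((an:ℤ) - b + 1 + j) *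
              zbinom ((y-1) + (an:ℤ) + b + ((c'+1:ℕ):ℤ) - j) (((c'+1:ℕ):ℤ) - j)) := by
        intro y
        rw [← Finset.sum_add_distrib, ← Finset.sum_add_distrib]
        refine Finset.sum_congr rfl fun j hj => ?_
        rw [zb_pascal (y + (an:ℤ)) ((an:ℤ) - b + 1 + j),
            zb_pascal (y + (an:ℤ) + b + ((c'+1:ℕ):ℤ) - j) (((c'+1:ℕ):ℤ) - j)]
        push_cast
        ring_nf
      have hstep : ∀ y : ℤ,
          (∑ j ∈ Finset.range (b+1), zbinom b j * zbinom (y + (an:ℤ)) ((an:ℤ) - b + 1 + j) *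
              zbinom (y + (an:ℤ) + b + ((c'+1:ℕ):ℤ) - j) (((c'+1:ℕ):ℤ) - j))
            - zbinom (y + (an:ℤ) + ((c'+1:ℕ):ℤ)) ((an:ℤ) - b + ((c'+1:ℕ):ℤ) + 1) *
                zbinom ((an:ℤ) + ((c'+1:ℕ):ℤ) + 1) ((c'+1:ℕ):ℤ)
        = (∑ j ∈ Finset.range (b+1), zbinom b j * zbinom ((y-1) + (an:ℤ)) ((an:ℤ) - b + 1 + j) *
              zbinom ((y-1) + (an:ℤ) + b + ((c'+1:ℕ):ℤ) - j) (((c'+1:ℕ):ℤ) - j))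
            - zbinom ((y-1) + (an:ℤ) + ((c'+1:ℕ):ℤ)) ((an:ℤ) - b + ((c'+1:ℕ):ℤ) + 1) *
                zbinom ((an:ℤ) + ((c'+1:ℕ):ℤ) + 1) ((c'+1:ℕ):ℤ) := by
        intro y
        rw [hrec y, ih1 b y, ih2 b y,
            zb_pascal (y + (an:ℤ) + ((c'+1:ℕ):ℤ)) ((an:ℤ) - b + ((c'+1:ℕ):ℤ) + 1),
            zb_pascal ((an:ℤ) + ((c'+1:ℕ):ℤ) + 1) ((c'+1:ℕ):ℤ)]
        set S := (∑ j ∈ Finset.range (b+1), zbinom b j * zbinom ((y-1) + (an:ℤ)) ((an:ℤ) - b + 1 + j) *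
              zbinom ((y-1) + (an:ℤ) + b + ((c'+1:ℕ):ℤ) - j) (((c'+1:ℕ):ℤ) - j)) with hS
        push_cast
        ring_nf
      have hconst := const_of_step (f := fun y =>
          (∑ j ∈ Finset.range (b+1), zbinom b j * zbinom (y + (an:ℤ)) ((an:ℤ) - b + 1 + j) *
              zbinom (y + (an:ℤ) + b + ((c'+1:ℕ):ℤ) - j) (((c'+1:ℕ):ℤ) - j))
            - zbinom (y + (an:ℤ) + ((c'+1:ℕ):ℤ)) ((an:ℤ) - b + ((c'+1:ℕ):ℤ) + 1) *
                zbinom ((an:ℤ) + ((c'+1:ℕ):ℤ) + 1) ((c'+1:ℕ):ℤ)) hstep y (-(an:ℤ))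
      have hanchor :
          (∑ j ∈ Finset.range (b+1), zbinom b j * zbinom (-(an:ℤ) + (an:ℤ)) ((an:ℤ) - b + 1 + j) *
              zbinom (-(an:ℤ) + (an:ℤ) + b + ((c'+1:ℕ):ℤ) - j) (((c'+1:ℕ):ℤ) - j))
          = zbinom (-(an:ℤ) + (an:ℤ) + ((c'+1:ℕ):ℤ)) ((an:ℤ) - b + ((c'+1:ℕ):ℤ) + 1) *
              zbinom ((an:ℤ) + ((c'+1:ℕ):ℤ) + 1) ((c'+1:ℕ):ℤ) := by
        by_cases hab : b ≤ an
        · rw [Finset.sum_eq_zero, show (-(an:ℤ) + an + ((c'+1:ℕ):ℤ)) = ((c'+1:ℕ):ℤ) by ring,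
            zb_nat_lt (c'+1) (show ((c'+1:ℕ):ℤ) < (an:ℤ) - b + ((c'+1:ℕ):ℤ) + 1 by push_cast; omega)]
          · ring
          · intro j hj
            rw [show (-(an:ℤ) + an) = 0 by ring,
              zb_zero_left (show (an:ℤ) - b + 1 + j ≠ 0 by push_cast; omega)]
            ring
        · -- an < b : single surviving term j = b - an - 1
          push_neg at hab
          rw [Finset.sum_eq_single_of_mem (b - an - 1) (Finset.mem_range.2 (by omega)) ?_]
          · have hcast : ((b - an - 1 : ℕ) : ℤ) = (b:ℤ) - an - 1 := by push_cast [Nat.cast_sub]; omega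
            rw [hcast,
              show (-(an:ℤ) + an) = 0 by ring,
              show ((an:ℤ) - b + 1 + ((b:ℤ) - an - 1)) = 0 by ring, zb_zero,
              show (0 + (b:ℤ) + ((c'+1:ℕ):ℤ) - ((b:ℤ) - an - 1)) = ((an + c' + 2 : ℕ):ℤ) by push_cast; ring,
              show (((c'+1:ℕ):ℤ) - ((b:ℤ) - an - 1)) = (an:ℤ) - b + ((c'+1:ℕ):ℤ) + 1 by ring,
              show (0 + ((c'+1:ℕ):ℤ)) = ((c'+1:ℕ):ℤ) by ring,
              show ((an:ℤ) + ((c'+1:ℕ):ℤ) + 1) = ((an + c' + 2 : ℕ):ℤ) by push_cast; ring]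
            by_cases hk : (an:ℤ) - b + ((c'+1:ℕ):ℤ) + 1 < 0
            · rw [zb_neg hk, zb_neg hk]; ring
            · push_neg at hk
              rw [zb_nat (an + c' + 2) hk, zb_nat (c'+1) hk,
                zb_nat b (show (0:ℤ) ≤ (b:ℤ) - an - 1 by omega),
                zb_nat (an + c' + 2) (show (0:ℤ) ≤ ((c'+1:ℕ):ℤ) by positivity)]
              have h5 : ((an:ℤ) - b + ((c'+1:ℕ):ℤ) + 1).toNat = an + c' + 2 - b := by
                push_cast at hk ⊢; omega
              have h5' : (((b:ℤ) - an - 1)).toNat = b - an - 1 := by omega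
              have h5'' : (((c'+1:ℕ):ℤ)).toNat = c' + 1 := by push_cast; omega
              rw [h5, h5', h5'']
              have hid := Nat.choose_mul (n := an+c'+2) (k := c'+1) (s := an+c'+2-b)
                (by push_cast at hk; omega)
              rw [show an+c'+2 - (an+c'+2-b) = b by push_cast at hk; omega,
                show c'+1 - (an+c'+2-b) = b - an - 1 by push_cast at hk; omega] at hid
              have h8 : Nat.choose b (b - an - 1) * Nat.choose (an+c'+2) (an+c'+2-b)
                  = Nat.choose (c'+1) (an+c'+2-b) * Nat.choose (an+c'+2) (c'+1) := by
                rw [mul_comm, ← hid, mul_comm]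
              rw [mul_one]
              exact_mod_cast h8
          · intro j hj hne
            rw [show (-(an:ℤ) + an) = 0 by ring,
              zb_zero_left (show (an:ℤ) - b + 1 + j ≠ 0 by
                simp only [Finset.mem_range] at hj; push_cast; omega)]
            ring
      have h9 := hconst
      rw [hanchor] at h9
      linarith

/-- `∑_{j ≥ 0} binom(b,j) binom(y+a, a-b+1+j) binom(y+a+b+c-j, c-j)
      = binom(y+a+c, a-b+c+1) binom(a+c+1, c)`,
for all integer values of `y` and nonnegative integers `a, b, c`.
The sum is finite: terms with `j > b` vanish, so it is taken over `0 ≤ j ≤ b`. -/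
theorem stmt1 (y : ℤ) (a b c : ℕ) :
    ∑ j ∈ Finset.range (b + 1),
        zbinom b j * zbinom (y + a) ((a : ℤ) - b + 1 + j) *
          zbinom (y + a + b + c - j) ((c : ℤ) - j) =
      zbinom (y + a + c) ((a : ℤ) - b + c + 1) * zbinom ((a : ℤ) + c + 1) c :=
  key (((a:ℤ)+1).toNat + c) (a:ℤ) (by omega) c rfl b y
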